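/- Let z_1,…,z_m ∈ R^p satisfy λ_max(m⁻¹ Σ_{i=1}^m z_i z_iᵀ) ≤ C₁ and sup_{‖α₁‖=‖α₂‖=1} Σ_{i=1}^m (α₁ᵀz_i)²(α₂ᵀz_i)² ≤ C₂·m. Let w : R → R be differentiable with |w′(s)| ≤ L for all s on the segments {z_iᵀ(β₀ + t(β − β₀)) : t ∈ [0,1]}, i = 1,…,m. Then every eigenvalue λ of the symmetric matrix Σ_{i=1}^m z_i [w(z_iᵀβ) − w(z_iᵀβ₀)] z_iᵀ satisfies |λ| ≤ L √(C₁ C₂) · m · ‖β − β₀‖; in particular, if ‖β − β₀‖ ≤ c√(p/m) then |λ| ≤ c·L·√(C₁ C₂ p m). -/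

import Mathlib

open Matrix
open scoped BigOperators

noncomputable section

namespace GLMPaper

/-- Squared Euclidean norm of a finite real vector. -/
def sqNorm {m : ℕ} (x : Fin m → ℝ) : ℝ := ∑ i, x i ^ 2

/-- Euclidean norm of a finite real vector. -/
def eNorm {m : ℕ} (x : Fin m → ℝ) : ℝ := Real.sqrt (sqNorm x)

lemma vecMulVec_mulVec' {pn : ℕ} (a b x : Fin pn → ℝ) :
    vecMulVec a b *ᵥ x = (b ⬝ᵥ x) • a := by
  funext j
  simp only [mulVec, dotProduct, vecMulVec_apply, Pi.smul_apply, smul_eq_mul, Finset.sum_mul]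
  exact Finset.sum_congr rfl fun k _ => by ring

lemma rayleigh_sum {m pn : ℕ} (z : Fin m → Fin pn → ℝ) (d : Fin m → ℝ) (u : Fin pn → ℝ) :
    u ⬝ᵥ ((∑ i, d i • vecMulVec (z i) (z i)) *ᵥ u) = ∑ i, d i * (z i ⬝ᵥ u) ^ 2 := by
  have h1 : (∑ i, d i • vecMulVec (z i) (z i)) *ᵥ u
      = ∑ i, (d i • vecMulVec (z i) (z i)) *ᵥ u := by
    funext j
    simp only [mulVec, dotProduct, Matrix.sum_apply, Finset.sum_mul, Finset.sum_apply]
    exact Finset.sum_comm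
  rw [h1]
  have h2 : u ⬝ᵥ (∑ i, (d i • vecMulVec (z i) (z i)) *ᵥ u)
      = ∑ i, u ⬝ᵥ ((d i • vecMulVec (z i) (z i)) *ᵥ u) := by
    simp only [dotProduct, Finset.sum_apply, Finset.mul_sum]
    exact Finset.sum_comm
  rw [h2]
  refine Finset.sum_congr rfl fun i _ => ?_
  rw [smul_mulVec, vecMulVec_mulVec', dotProduct_smul, dotProduct_smul,
    smul_eq_mul, smul_eq_mul, dotProduct_comm (z i) u]
  ring

lemma rayleigh_sum' {m pn : ℕ} (z : Fin m → Fin pn → ℝ) (u : Fin pn → ℝ) :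
    u ⬝ᵥ ((∑ i, vecMulVec (z i) (z i)) *ᵥ u) = ∑ i, (z i ⬝ᵥ u) ^ 2 := by
  have h := rayleigh_sum z (fun _ => 1) u
  simpa using h

lemma mvt_bound (w : ℝ → ℝ) (hw : Differentiable ℝ w) (a b L : ℝ)
    (hL : ∀ t ∈ Set.Icc (0:ℝ) 1, |deriv w (a + t * b)| ≤ L) :
    |w (a + b) - w a| ≤ L * |b| := by
  have hderiv : ∀ t ∈ Set.Icc (0:ℝ) 1,
      HasDerivWithinAt (fun t => w (a + t * b)) (deriv w (a + t * b) * b) (Set.Icc 0 1) t := by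
    intro t _
    have hlin : HasDerivAt (fun t : ℝ => a + t * b) b t := by
      simpa using ((hasDerivAt_id t).mul_const b).const_add a
    exact ((hw (a + t * b)).hasDerivAt.comp t hlin).hasDerivWithinAt
  have hbound : ∀ t ∈ Set.Icc (0:ℝ) 1, ‖deriv w (a + t * b) * b‖ ≤ L * |b| := by
    intro t ht
    rw [Real.norm_eq_abs, abs_mul]
    exact mul_le_mul_of_nonneg_right (hL t ht) (abs_nonneg b)
  have := (convex_Icc (0:ℝ) 1).norm_image_sub_le_of_norm_hasDerivWithin_le hderiv hbound
    (Set.left_mem_Icc.2 zero_le_one) (Set.right_mem_Icc.2 zero_le_one)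
  simpa [Real.norm_eq_abs] using this

lemma cs_sqrt {m : ℕ} (f g : Fin m → ℝ) :
    ∑ i, f i * g i ≤ Real.sqrt (∑ i, f i ^ 2) * Real.sqrt (∑ i, g i ^ 2) := by
  have h2 := Finset.sum_mul_sq_le_sq_mul_sq Finset.univ f g
  calc ∑ i, f i * g i ≤ |∑ i, f i * g i| := le_abs_self _
    _ = Real.sqrt ((∑ i, f i * g i) ^ 2) := (Real.sqrt_sq_eq_abs _).symm
    _ ≤ Real.sqrt ((∑ i, f i ^ 2) * ∑ i, g i ^ 2) := Real.sqrt_le_sqrt h2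
    _ = _ := Real.sqrt_mul (Finset.sum_nonneg fun i _ => sq_nonneg _) _

theorem weighted_gram_perturbation {m pn : ℕ}
    (z : Fin m → Fin pn → ℝ) (w : ℝ → ℝ) (β β₀ : Fin pn → ℝ) (C₁ C₂ L c : ℝ)
    (hC1 : ∀ x : Fin pn → ℝ,
      x ⬝ᵥ ((∑ i, vecMulVec (z i) (z i)) *ᵥ x) ≤ C₁ * m * sqNorm x)
    (hC2 : ∀ α₁ α₂ : Fin pn → ℝ, sqNorm α₁ = 1 → sqNorm α₂ = 1 →
      ∑ i, (α₁ ⬝ᵥ z i) ^ 2 * (α₂ ⬝ᵥ z i) ^ 2 ≤ C₂ * m)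
    (hw : Differentiable ℝ w)
    (hL : ∀ i, ∀ t ∈ Set.Icc (0:ℝ) 1, |deriv w (z i ⬝ᵥ (β₀ + t • (β - β₀)))| ≤ L)
    (hD : (∑ i, (w (z i ⬝ᵥ β) - w (z i ⬝ᵥ β₀)) • vecMulVec (z i) (z i)).IsHermitian) :
    (∀ j, |hD.eigenvalues j| ≤ L * Real.sqrt (C₁ * C₂) * m * eNorm (β - β₀)) ∧
    (eNorm (β - β₀) ≤ c * Real.sqrt ((pn : ℝ) / (m : ℝ)) →
      ∀ j, |hD.eigenvalues j| ≤ c * L * Real.sqrt (C₁ * C₂ * pn * m)) := by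
  classical
  set d : Fin m → ℝ := fun i => w (z i ⬝ᵥ β) - w (z i ⬝ᵥ β₀) with hd
  -- eigenvalue identity via Rayleigh quotient at eigenvector
  have hlam : ∀ j, ∃ u : Fin pn → ℝ, sqNorm u = 1 ∧
      hD.eigenvalues j = ∑ i, d i * (z i ⬝ᵥ u) ^ 2 := by
    intro j
    refine ⟨⇑(hD.eigenvectorBasis j), ?_, ?_⟩
    · have hn := hD.eigenvectorBasis.orthonormal.1 j
      rw [EuclideanSpace.norm_eq] at hn
      have h0 : (0:ℝ) ≤ ∑ i, (hD.eigenvectorBasis j) i ^ 2 :=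
        Finset.sum_nonneg fun i _ => sq_nonneg _
      have hn' : Real.sqrt (∑ i, (hD.eigenvectorBasis j) i ^ 2) = 1 := by
        simpa [Real.norm_eq_abs, sq_abs] using hn
      have := Real.sq_sqrt h0
      rw [hn'] at this
      simpa [sqNorm] using this.symm
    · set u : Fin pn → ℝ := ⇑(hD.eigenvectorBasis j) with hu
      have hmul := hD.mulVec_eigenvectorBasis j
      have hdot : u ⬝ᵥ u = 1 := by
        have hn := hD.eigenvectorBasis.orthonormal.1 j
        rw [EuclideanSpace.norm_eq] at hn
        have h0 : (0:ℝ) ≤ ∑ i, u i ^ 2 := Finset.sum_nonneg fun i _ => sq_nonneg _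
        have hn' : Real.sqrt (∑ i, u i ^ 2) = 1 := by
          simpa [Real.norm_eq_abs, sq_abs] using hn
        have h2 : u ⬝ᵥ u = ∑ i, u i ^ 2 := by simp [dotProduct, pow_two]
        rw [h2, ← Real.sq_sqrt h0, hn']
        norm_num
      calc hD.eigenvalues j = hD.eigenvalues j * (u ⬝ᵥ u) := by rw [hdot, mul_one]
        _ = u ⬝ᵥ (hD.eigenvalues j • u) := by rw [dotProduct_smul, smul_eq_mul]
        _ = u ⬝ᵥ ((∑ i, d i • vecMulVec (z i) (z i)) *ᵥ u) := by rw [← hmul]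
        _ = ∑ i, d i * (z i ⬝ᵥ u) ^ 2 := rayleigh_sum z d u
  -- part 1
  have P1 : ∀ j, |hD.eigenvalues j| ≤ L * Real.sqrt (C₁ * C₂) * m * eNorm (β - β₀) := by
    intro j
    obtain ⟨u, hu1, hval⟩ := hlam j
    by_cases hβ : β = β₀
    · have hz : ∀ i, d i = 0 := fun i => by simp [hd, hβ]
      have : hD.eigenvalues j = 0 := by rw [hval]; simp [hz]
      rw [this, hβ]
      simp [eNorm, sqNorm]
    rcases Nat.eq_zero_or_pos m with hm0 | hm
    · subst hm0
      have : hD.eigenvalues j = 0 := by rw [hval]; simp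
      rw [this]
      simp
    have hmpos : (0:ℝ) < m := by exact_mod_cast hm
    have hLnn : 0 ≤ L := le_trans (abs_nonneg _) (hL ⟨0, hm⟩ 0 ⟨le_refl _, zero_le_one⟩)
    set Δ : Fin pn → ℝ := β - β₀ with hΔ
    have hΔnn : 0 ≤ sqNorm Δ := Finset.sum_nonneg fun i _ => sq_nonneg _
    set n : ℝ := eNorm Δ with hn
    have hn2 : n ^ 2 = sqNorm Δ := Real.sq_sqrt hΔnn
    have hnpos : 0 < n := by
      rw [hn, eNorm]
      apply Real.sqrt_pos.2
      rcases hΔnn.lt_or_eq with h | h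
      · exact h
      · exfalso
        apply hβ
        have hall := (Finset.sum_eq_zero_iff_of_nonneg
          (fun i _ => sq_nonneg (Δ i))).1 h.symm
        funext k
        have := hall k (Finset.mem_univ k)
        have hk : Δ k = 0 := by
          have := sq_eq_zero_iff.1 this
          exact this
        have : β k - β₀ k = 0 := hk
        linarith
    set α₂ : Fin pn → ℝ := n⁻¹ • Δ with hα₂
    have hα : sqNorm α₂ = 1 := by
      have : sqNorm α₂ = n⁻¹ ^ 2 * sqNorm Δ := by
        simp only [sqNorm, hα₂, Pi.smul_apply, smul_eq_mul, mul_pow, ← Finset.mul_sum]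
      rw [this, ← hn2]
      field_simp
    -- B1
    have hB1 : ∑ i, (z i ⬝ᵥ u) ^ 2 ≤ C₁ * m := by
      have h := hC1 u
      rw [hu1, mul_one, rayleigh_sum'] at h
      exact h
    have hB1nn : (0:ℝ) ≤ ∑ i, (z i ⬝ᵥ u) ^ 2 := Finset.sum_nonneg fun i _ => sq_nonneg _
    -- B2
    have hB2 : ∑ i, (z i ⬝ᵥ Δ) ^ 2 * (z i ⬝ᵥ u) ^ 2 ≤ C₂ * m * n ^ 2 := by
      have h := hC2 u α₂ hu1 hα
      have hsum : ∑ i, (u ⬝ᵥ z i) ^ 2 * (α₂ ⬝ᵥ z i) ^ 2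
          = n⁻¹ ^ 2 * ∑ i, (z i ⬝ᵥ Δ) ^ 2 * (z i ⬝ᵥ u) ^ 2 := by
        rw [Finset.mul_sum]
        refine Finset.sum_congr rfl fun i _ => ?_
        rw [hα₂, smul_dotProduct, smul_eq_mul, dotProduct_comm (z i) Δ, dotProduct_comm (z i) u]
        ring
      rw [hsum] at h
      have hne : n ≠ 0 := ne_of_gt hnpos
      calc ∑ i, (z i ⬝ᵥ Δ) ^ 2 * (z i ⬝ᵥ u) ^ 2
          = n ^ 2 * (n⁻¹ ^ 2 * ∑ i, (z i ⬝ᵥ Δ) ^ 2 * (z i ⬝ᵥ u) ^ 2) := by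
            field_simp
        _ ≤ n ^ 2 * (C₂ * m) := mul_le_mul_of_nonneg_left h (sq_nonneg n)
        _ = C₂ * m * n ^ 2 := by ring
    have hB2nn : (0:ℝ) ≤ ∑ i, (z i ⬝ᵥ Δ) ^ 2 * (z i ⬝ᵥ u) ^ 2 :=
      Finset.sum_nonneg fun i _ => mul_nonneg (sq_nonneg _) (sq_nonneg _)
    have hC1nn : 0 ≤ C₁ := by nlinarith [le_trans hB1nn hB1]
    have hC2nn : 0 ≤ C₂ := by nlinarith [le_trans hB2nn hB2, mul_pos hmpos (mul_pos hnpos hnpos)]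
    -- MVT per term
    have hdb : ∀ i, |d i| ≤ L * |z i ⬝ᵥ Δ| := by
      intro i
      have hab : z i ⬝ᵥ β = z i ⬝ᵥ β₀ + z i ⬝ᵥ Δ := by
        rw [hΔ, dotProduct_sub]; ring
      have hcond : ∀ t ∈ Set.Icc (0:ℝ) 1, |deriv w (z i ⬝ᵥ β₀ + t * (z i ⬝ᵥ Δ))| ≤ L := by
        intro t ht
        have h := hL i t ht
        have heq : z i ⬝ᵥ (β₀ + t • (β - β₀)) = z i ⬝ᵥ β₀ + t * (z i ⬝ᵥ Δ) := by
          rw [dotProduct_add, dotProduct_smul, smul_eq_mul, hΔ]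
        rwa [heq] at h
      have := mvt_bound w hw (z i ⬝ᵥ β₀) (z i ⬝ᵥ Δ) L hcond
      rw [← hab] at this
      simpa [hd] using this
    -- chain
    have key : |hD.eigenvalues j| ≤ L * (Real.sqrt (C₂ * m * n ^ 2) * Real.sqrt (C₁ * m)) := by
      calc |hD.eigenvalues j| = |∑ i, d i * (z i ⬝ᵥ u) ^ 2| := by rw [hval]
        _ ≤ ∑ i, |d i * (z i ⬝ᵥ u) ^ 2| := Finset.abs_sum_le_sum_abs _ _
        _ = ∑ i, |d i| * (z i ⬝ᵥ u) ^ 2 := by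
            refine Finset.sum_congr rfl fun i _ => ?_
            rw [abs_mul, abs_of_nonneg (sq_nonneg (z i ⬝ᵥ u))]
        _ ≤ ∑ i, (L * |z i ⬝ᵥ Δ|) * (z i ⬝ᵥ u) ^ 2 :=
            Finset.sum_le_sum fun i _ => mul_le_mul_of_nonneg_right (hdb i) (sq_nonneg _)
        _ = L * ∑ i, (|z i ⬝ᵥ Δ| * |z i ⬝ᵥ u|) * |z i ⬝ᵥ u| := by
            rw [Finset.mul_sum]
            refine Finset.sum_congr rfl fun i _ => ?_
            rw [← sq_abs (z i ⬝ᵥ u)]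
            ring
        _ ≤ L * (Real.sqrt (∑ i, ((|z i ⬝ᵥ Δ| * |z i ⬝ᵥ u|)) ^ 2)
              * Real.sqrt (∑ i, |z i ⬝ᵥ u| ^ 2)) :=
            mul_le_mul_of_nonneg_left (cs_sqrt _ _) hLnn
        _ = L * (Real.sqrt (∑ i, (z i ⬝ᵥ Δ) ^ 2 * (z i ⬝ᵥ u) ^ 2)
              * Real.sqrt (∑ i, (z i ⬝ᵥ u) ^ 2)) := by
            simp [mul_pow, sq_abs]
        _ ≤ L * (Real.sqrt (C₂ * m * n ^ 2) * Real.sqrt (C₁ * m)) := by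
            apply mul_le_mul_of_nonneg_left _ hLnn
            exact mul_le_mul (Real.sqrt_le_sqrt hB2) (Real.sqrt_le_sqrt hB1)
              (Real.sqrt_nonneg _) (Real.sqrt_nonneg _)
    have harith : Real.sqrt (C₂ * m * n ^ 2) * Real.sqrt (C₁ * m)
        = Real.sqrt (C₁ * C₂) * (n * m) := by
      rw [← Real.sqrt_mul (by positivity)]
      have heq : (C₂ * m * n ^ 2) * (C₁ * m) = (C₁ * C₂) * (n * m) ^ 2 := by ring
      rw [heq, Real.sqrt_mul (mul_nonneg hC1nn hC2nn),
        Real.sqrt_sq (by positivity)]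
    rw [harith] at key
    calc |hD.eigenvalues j| ≤ L * (Real.sqrt (C₁ * C₂) * (n * m)) := key
      _ = L * Real.sqrt (C₁ * C₂) * m * n := by ring
  refine ⟨P1, ?_⟩
  intro hsmall j
  rcases Nat.eq_zero_or_pos m with hm0 | hm
  · obtain ⟨u, hu1, hval⟩ := hlam j
    subst hm0
    have : hD.eigenvalues j = 0 := by rw [hval]; simp
    rw [this]
    norm_num
  have hmpos : (0:ℝ) < m := by exact_mod_cast hm
  have hLnn : 0 ≤ L := le_trans (abs_nonneg _) (hL ⟨0, hm⟩ 0 ⟨le_refl _, zero_le_one⟩)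
  -- nonnegativity of C₁, C₂ via a unit vector
  obtain ⟨u, hu1, -⟩ := hlam j
  have hC1nn : 0 ≤ C₁ := by
    have h := hC1 u
    rw [hu1, mul_one, rayleigh_sum'] at h
    have hnn : (0:ℝ) ≤ ∑ i, (z i ⬝ᵥ u) ^ 2 := Finset.sum_nonneg fun i _ => sq_nonneg _
    nlinarith
  have hC2nn : 0 ≤ C₂ := by
    have h := hC2 u u hu1 hu1
    have hnn : (0:ℝ) ≤ ∑ i, (u ⬝ᵥ z i) ^ 2 * (u ⬝ᵥ z i) ^ 2 :=
      Finset.sum_nonneg fun i _ => mul_nonneg (sq_nonneg _) (sq_nonneg _)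
    nlinarith
  have h1 := P1 j
  have h2 : L * Real.sqrt (C₁ * C₂) * m * eNorm (β - β₀)
      ≤ L * Real.sqrt (C₁ * C₂) * m * (c * Real.sqrt ((pn : ℝ) / m)) := by
    apply mul_le_mul_of_nonneg_left hsmall
    positivity
  have h3 : L * Real.sqrt (C₁ * C₂) * m * (c * Real.sqrt ((pn : ℝ) / m))
      = c * L * Real.sqrt (C₁ * C₂ * pn * m) := by
    have hmne : (m:ℝ) ≠ 0 := ne_of_gt hmpos
    have hms : (m:ℝ) * Real.sqrt ((pn:ℝ) / m) = Real.sqrt ((pn:ℝ) * m) := by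
      rw [show (m:ℝ) = Real.sqrt ((m:ℝ) ^ 2) from (Real.sqrt_sq hmpos.le).symm,
        ← Real.sqrt_mul (by positivity)]
      congr 1
      field_simp
      rw [Real.sq_sqrt (by positivity)]
      ring
    calc L * Real.sqrt (C₁ * C₂) * m * (c * Real.sqrt ((pn : ℝ) / m))
        = c * L * (Real.sqrt (C₁ * C₂) * ((m:ℝ) * Real.sqrt ((pn:ℝ) / m))) := by ring
      _ = c * L * (Real.sqrt (C₁ * C₂) * Real.sqrt ((pn:ℝ) * m)) := by rw [hms]
      _ = c * L * Real.sqrt (C₁ * C₂ * ((pn:ℝ) * m)) := by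
          rw [Real.sqrt_mul (mul_nonneg hC1nn hC2nn)]
      _ = c * L * Real.sqrt (C₁ * C₂ * pn * m) := by rw [mul_assoc (C₁ * C₂)]
  linarith

end GLMPaper
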